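/- Let G be a finite group, H ≤ G a subgroup, and let ρ be an irreducible complex representation of G chosen according to the Plancherel measure. With X_H = ⟨Res_H χ_ρ, 1⟩_H / d_ρ, the second moment satisfies E_ρ[X_H²] = (1/(|G|·|H|²)) · Σ_{h₁,h₂ ∈ H} |{g ∈ G : h₁⁻¹ g h₂ = g}|. -/

import Mathlib

open CategoryTheory
open scoped Classical

section PlancherelAux

open Module

noncomputable section
set_option linter.unusedSectionVars false

variable {G : Type} [Group G] [Fintype G]

lemma FDRepAux.card_ne_zero' (G : Type) [Group G] [Fintype G] : (Fintype.card G : ℂ) ≠ 0 :=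
  Nat.cast_ne_zero.2 Fintype.card_ne_zero

def InvSub (V : FDRep ℂ G) (p : Submodule ℂ V) : Prop := ∀ (g : G), ∀ x ∈ p, V.ρ g x ∈ p

def resRep (V : FDRep ℂ G) (p : Submodule ℂ V) (hp : InvSub V p) : Representation ℂ G p where
  toFun g := (V.ρ g).restrict (hp g)
  map_one' := by ext x; simp [LinearMap.restrict_apply]
  map_mul' g h := by ext x; simp [LinearMap.restrict_apply]

def subRep (V : FDRep ℂ G) (p : Submodule ℂ V) (hp : InvSub V p) : FDRep ℂ G :=
  FDRep.of (resRep V p hp)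

lemma subRep_char (V : FDRep ℂ G) (p : Submodule ℂ V) (hp : InvSub V p) (g : G) :
    (subRep V p hp).character g = LinearMap.trace ℂ p ((V.ρ g).restrict (hp g)) := rfl

lemma trace_isCompl {V : Type} [AddCommGroup V] [Module ℂ V] [FiniteDimensional ℂ V]
    (f : V →ₗ[ℂ] V) (p q : Submodule ℂ V) (h : IsCompl p q)
    (hp : ∀ x ∈ p, f x ∈ p) (hq : ∀ x ∈ q, f x ∈ q) :
    LinearMap.trace ℂ V f
      = LinearMap.trace ℂ p (f.restrict hp) + LinearMap.trace ℂ q (f.restrict hq) := by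
  let e : (p × q) ≃ₗ[ℂ] V := Submodule.prodEquivOfIsCompl p q h
  have he : e.conj ((f.restrict hp).prodMap (f.restrict hq)) = f := by
    apply LinearMap.ext
    intro v
    obtain ⟨x, y, rfl⟩ : ∃ x : p, ∃ y : q, (x : V) + y = v := by
      have := Submodule.codisjoint_iff_exists_add_eq.mp h.codisjoint v
      obtain ⟨a, b, ha, hb, hab⟩ := this
      exact ⟨⟨a, ha⟩, ⟨b, hb⟩, hab⟩
    have h1 : e.symm ((x : V) + y) = (x, y) := by
      apply e.injective
      simp [e, Submodule.coe_prodEquivOfIsCompl']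
    rw [LinearEquiv.conj_apply, LinearMap.comp_apply, LinearMap.comp_apply]
    simp only [LinearEquiv.coe_coe, h1]
    show e ((f.restrict hp x), (f.restrict hq y)) = _
    simp [e, Submodule.coe_prodEquivOfIsCompl', LinearMap.restrict_apply, map_add]
  calc LinearMap.trace ℂ V f
      = LinearMap.trace ℂ V (e.conj ((f.restrict hp).prodMap (f.restrict hq))) := by rw [he]
    _ = LinearMap.trace ℂ (p × q) ((f.restrict hp).prodMap (f.restrict hq)) :=
        LinearMap.trace_conj' _ _
    _ = _ := LinearMap.trace_prodMap' _ _

lemma exists_invariant_compl (V : FDRep ℂ G) (p : Submodule ℂ V) (hp : InvSub V p) :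
    ∃ q : Submodule ℂ V, IsCompl p q ∧ InvSub V q := by
  obtain ⟨q₀, hq₀⟩ := Submodule.exists_isCompl p
  set π₀ : V →ₗ[ℂ] V := p.subtype ∘ₗ (p.linearProjOfIsCompl q₀ hq₀) with hπ₀
  have hπ₀mem : ∀ x : V, π₀ x ∈ p := fun x => (p.linearProjOfIsCompl q₀ hq₀ x).2
  have hπ₀fix : ∀ x ∈ p, π₀ x = x := by
    intro x hx
    exact congrArg Subtype.val (Submodule.projectionOnto_apply_left hq₀ ⟨x, hx⟩)
  set T : V →ₗ[ℂ] V :=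
    (Fintype.card G : ℂ)⁻¹ • ∑ g : G, (V.ρ g⁻¹) ∘ₗ π₀ ∘ₗ (V.ρ g) with hT
  have hTmem : ∀ x : V, T x ∈ p := by
    intro x
    rw [hT]
    simp only [LinearMap.smul_apply, LinearMap.sum_apply, LinearMap.comp_apply]
    exact Submodule.smul_mem _ _ (Submodule.sum_mem _ fun g _ => hp g⁻¹ _ (hπ₀mem _))
  have hTfix : ∀ x ∈ p, T x = x := by
    intro x hx
    rw [hT]
    simp only [LinearMap.smul_apply, LinearMap.sum_apply, LinearMap.comp_apply]
    have : ∀ g : G, (V.ρ g⁻¹) (π₀ ((V.ρ g) x)) = x := by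
      intro g
      rw [hπ₀fix _ (hp g x hx)]
      have : V.ρ g⁻¹ * V.ρ g = 1 := by rw [← map_mul, inv_mul_cancel, map_one]
      calc (V.ρ g⁻¹) ((V.ρ g) x) = (V.ρ g⁻¹ * V.ρ g) x := rfl
        _ = x := by rw [this]; rfl
    rw [Finset.sum_congr rfl fun g _ => this g, Finset.sum_const, Finset.card_univ,
      ← Nat.cast_smul_eq_nsmul ℂ, smul_smul, inv_mul_cancel₀ (FDRepAux.card_ne_zero' G), one_smul]
  have hTcomm : ∀ h : G, T ∘ₗ V.ρ h = V.ρ h ∘ₗ T := by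
    intro h
    rw [hT]
    ext x
    simp only [LinearMap.smul_apply, LinearMap.comp_apply, LinearMap.sum_apply, map_smul,
      map_sum]
    congr 1
    refine Fintype.sum_bijective (· * h) (Group.mulRight_bijective h) _ _ fun g => ?_
    simp only [LinearMap.comp_apply, mul_inv_rev, map_mul, Module.End.mul_apply]
    have : (V.ρ h) ((V.ρ h⁻¹) ((V.ρ g⁻¹) (π₀ ((V.ρ g) ((V.ρ h) x)))))
        = (V.ρ (h * h⁻¹)) ((V.ρ g⁻¹) (π₀ ((V.ρ g) ((V.ρ h) x)))) := by
      rw [map_mul]; rfl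
    rw [this, mul_inv_cancel, map_one, Module.End.one_apply]
  refine ⟨LinearMap.ker T, ?_, ?_⟩
  · have := LinearMap.isCompl_of_proj (f := T.codRestrict p hTmem)
      (fun x : p => Subtype.ext (hTfix x x.2))
    rwa [LinearMap.ker_codRestrict] at this
  · intro g x hx
    have : T (V.ρ g x) = V.ρ g (T x) := congrFun (congrArg (fun f => f.toFun) (hTcomm g)) x
    simp only [LinearMap.mem_ker] at hx ⊢
    rw [this, hx, map_zero]

lemma comm_of_hom {V W : FDRep ℂ G} (f : V ⟶ W) (g : G) (v : V) :
    f.hom (V.ρ g v) = W.ρ g (f.hom v) :=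
  congrArg (fun p : V.V ⟶ W.V => ConcreteCategory.hom p v) (f.comm g)

lemma hom_ext' {V W : FDRep ℂ G} {f f' : V ⟶ W} (h : ∀ v : V, f.hom v = f'.hom v) : f = f' := by
  apply Action.hom_ext
  exact ConcreteCategory.hom_ext _ _ h

lemma simple_of_trivial_invariant (V : FDRep ℂ G) (hnt : Nontrivial V)
    (hmin : ∀ p : Submodule ℂ V, InvSub V p → p ≠ ⊥ → p = ⊤) : Simple V := by
  constructor
  intro Y f hf
  constructor
  · intro hiso hf0
    obtain ⟨w, hw1, hw2⟩ := hiso.out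
    rw [hf0, Limits.comp_zero] at hw2
    have h1 : (𝟙 V : V ⟶ V) = 0 := hw2.symm
    obtain ⟨x, hx⟩ := exists_ne (0 : V)
    have : x = 0 := congrArg (fun p : V ⟶ V => ConcreteCategory.hom p.hom x) h1
    exact hx this
  · intro hf0
    -- kernel is trivial
    have hker : ∀ (g : G), ∀ x ∈ LinearMap.ker (ConcreteCategory.hom f.hom : Y →ₗ[ℂ] V), Y.ρ g x ∈ LinearMap.ker (ConcreteCategory.hom f.hom : Y →ₗ[ℂ] V) := by
      intro g x hx
      exact LinearMap.mem_ker.mpr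
        ((comm_of_hom f g x).trans (by rw [LinearMap.mem_ker.mp hx, map_zero]))
    have hkerbot : LinearMap.ker (ConcreteCategory.hom f.hom : Y →ₗ[ℂ] V) = ⊥ := by
      by_contra hne
      set K := subRep Y (LinearMap.ker (ConcreteCategory.hom f.hom : Y →ₗ[ℂ] V)) hker
      let k : K ⟶ Y := ⟨FGModuleCat.ofHom (LinearMap.ker (ConcreteCategory.hom f.hom : Y →ₗ[ℂ] V)).subtype, fun g => by
        ext x; rfl⟩
      have h1 : k ≫ f = (0 : K ⟶ Y) ≫ f := by
        apply hom_ext'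
        intro v
        show f.hom (k.hom v) = f.hom ((0 : K →ₗ[ℂ] Y) v)
        simp only [LinearMap.zero_apply, map_zero]
        exact v.2
      have h2 : k = 0 := Mono.right_cancellation _ _ h1
      apply hne
      rw [eq_bot_iff]
      intro x hx
      have : k.hom ⟨x, hx⟩ = (0 : K ⟶ Y).hom ⟨x, hx⟩ := by rw [h2]
      exact this
    -- range is everything
    have hrange : LinearMap.range (ConcreteCategory.hom f.hom : Y →ₗ[ℂ] V) = ⊤ := by
      apply hmin
      · intro g x hx
        obtain ⟨y, rfl⟩ := hx
        exact ⟨Y.ρ g y, comm_of_hom f g y⟩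
      · intro hbot
        apply hf0
        apply hom_ext'
        intro v
        have : f.hom v ∈ LinearMap.range (ConcreteCategory.hom f.hom : Y →ₗ[ℂ] V) := ⟨v, rfl⟩
        rw [hbot] at this
        exact (show f.hom v = 0 by simpa using this)
    let e : Y ≃ₗ[ℂ] V := LinearEquiv.ofBijective (ConcreteCategory.hom f.hom : Y →ₗ[ℂ] V)
      ⟨LinearMap.ker_eq_bot.mp hkerbot, LinearMap.range_eq_top.mp hrange⟩
    let finv : V ⟶ Y := ⟨FGModuleCat.ofHom (e.symm : V →ₗ[ℂ] Y), fun g => by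
      ext v
      show e.symm (V.ρ g v) = Y.ρ g (e.symm v)
      apply e.injective
      show f.hom _ = f.hom _
      rw [comm_of_hom f]
      have : ∀ w, f.hom (e.symm w) = w := fun w => e.apply_symm_apply w
      rw [this, this]⟩
    refine ⟨finv, ?_, ?_⟩
    · apply hom_ext'
      intro v
      show e.symm (f.hom v) = v
      exact e.symm_apply_apply v
    · apply hom_ext'
      intro v
      show f.hom (e.symm v) = v
      exact e.apply_symm_apply v

lemma exists_simple_subrep (V : FDRep ℂ G) (hnt : Nontrivial V) :
    ∃ (p : Submodule ℂ V) (hp : InvSub V p), p ≠ ⊥ ∧ Simple (subRep V p hp) := by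
  set s : Set ℕ := {n | ∃ p : Submodule ℂ V, InvSub V p ∧ p ≠ ⊥ ∧ finrank ℂ p = n} with hs
  have hsne : s.Nonempty := by
    refine ⟨finrank ℂ (⊤ : Submodule ℂ V), ⊤, fun g x _ => trivial, ?_, rfl⟩
    intro h
    obtain ⟨x, hx⟩ := exists_ne (0 : V)
    have hx2 : x ∈ (⊥ : Submodule ℂ V) := h ▸ (Submodule.mem_top : x ∈ (⊤ : Submodule ℂ V))
    exact hx ((Submodule.mem_bot ℂ).mp hx2)
  obtain ⟨p, hpinv, hpbot, hprank⟩ := Nat.sInf_mem hsne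
  refine ⟨p, hpinv, hpbot, ?_⟩
  apply simple_of_trivial_invariant
  · exact Submodule.nontrivial_iff_ne_bot.mpr hpbot
  · intro q hq hqbot
    -- q is an invariant submodule of the subrep on p
    let qq : Submodule ℂ ↥p := q
    set q' : Submodule ℂ V := qq.map p.subtype with hq'
    have hq'inv : InvSub V q' := by
      intro g x hx
      obtain ⟨y, hy, hyx⟩ := hx
      have h5 : (subRep V p hpinv).ρ g (show CoeSort.coe (subRep V p hpinv) from y) ∈ q :=
        hq g y hy
      refine ⟨(subRep V p hpinv).ρ g (show CoeSort.coe (subRep V p hpinv) from y), h5, ?_⟩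
      subst hyx
      rfl
    have hq'bot : q' ≠ ⊥ := by
      intro hb
      apply hqbot
      rw [eq_bot_iff]
      intro y hy
      have : p.subtype (show ↥p from y) ∈ q' := ⟨y, hy, rfl⟩
      rw [hb] at this
      exact (Submodule.mem_bot ℂ).2 (Subtype.ext (by simpa using this : ((show ↥p from y) : V) = 0))
    have h1 : sInf s ≤ finrank ℂ q' := Nat.sInf_le ⟨q', hq'inv, hq'bot, rfl⟩
    have h2 : finrank ℂ q' ≤ finrank ℂ p := Submodule.finrank_mono (Submodule.map_subtype_le p q)
    have h3 : finrank ℂ qq = finrank ℂ q' := (Submodule.finrank_map_subtype_eq p qq).symm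
    have h4 : finrank ℂ (subRep V p hpinv) = finrank ℂ p := rfl
    show qq = ⊤
    apply Submodule.eq_top_of_finrank_eq
    omega

lemma char_split (V : FDRep ℂ G) (p q : Submodule ℂ V) (h : IsCompl p q)
    (hp : InvSub V p) (hq : InvSub V q) (g : G) :
    V.character g = (subRep V p hp).character g + (subRep V q hq).character g :=
  trace_isCompl (V.ρ g) p q h (hp g) (hq g)

lemma char_decomp {ι : Type} [Fintype ι] (ρ : ι → FDRep ℂ G)
    (hcomplete : ∀ V : FDRep ℂ G, Simple V → ∃ i, Nonempty (V ≅ ρ i))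
    (V : FDRep ℂ G) :
    ∃ m : ι → ℕ, ∀ g : G, V.character g = ∑ i, (m i : ℂ) * (ρ i).character g := by
  suffices h : ∀ (n : ℕ) (V : FDRep ℂ G), finrank ℂ V ≤ n →
      ∃ m : ι → ℕ, ∀ g : G, V.character g = ∑ i, (m i : ℂ) * (ρ i).character g from
    h (finrank ℂ V) V le_rfl
  intro n
  induction n with
  | zero =>
    intro V hV
    have : Subsingleton V := by
      rw [← finrank_zero_iff (R := ℂ)]
      omega
    refine ⟨0, fun g => ?_⟩
    have h0 : V.ρ g = 0 := Subsingleton.elim _ _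
    show LinearMap.trace ℂ V (V.ρ g) = _
    rw [h0, map_zero]
    simp
  | succ n ih =>
    intro V hV
    by_cases hle : finrank ℂ V ≤ n
    · exact ih V hle
    have hnt : Nontrivial V := by
      rw [← Module.finrank_pos_iff (R := ℂ)]
      omega
    obtain ⟨p, hp, hpbot, hpsimple⟩ := exists_simple_subrep V hnt
    obtain ⟨q, hcompl, hqinv⟩ := exists_invariant_compl V p hp
    obtain ⟨i₀, ⟨iso⟩⟩ := hcomplete (subRep V p hp) hpsimple
    have hrank : finrank ℂ p + finrank ℂ q = finrank ℂ V :=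
      Submodule.finrank_add_eq_of_isCompl hcompl
    have hppos : 0 < finrank ℂ p := by
      rw [Module.finrank_pos_iff (R := ℂ)]
      exact Submodule.nontrivial_iff_ne_bot.mpr hpbot
    have hqrank : finrank ℂ (subRep V q hqinv) ≤ n := by
      have : finrank ℂ (subRep V q hqinv) = finrank ℂ q := rfl
      omega
    obtain ⟨m, hm⟩ := ih (subRep V q hqinv) hqrank
    refine ⟨fun i => m i + if i = i₀ then 1 else 0, fun g => ?_⟩
    rw [char_split V p q hcompl hp hqinv g, hm g, FDRep.char_iso iso]
    push_cast
    rw [Finset.sum_congr rfl (fun i _ => add_mul (m i : ℂ) _ _), Finset.sum_add_distrib]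
    have : ∑ i, (if i = i₀ then (1:ℂ) else 0) * (ρ i).character g = (ρ i₀).character g := by
      simp
    rw [this]
    ring

def regRep (G : Type) [Group G] [Fintype G] : FDRep ℂ G :=
  FDRep.of (Representation.ofMulAction ℂ G G)

lemma regRep_char (x : G) :
    (regRep G).character x = if x = 1 then (Fintype.card G : ℂ) else 0 := by
  show LinearMap.trace ℂ (MonoidAlgebra ℂ G) (Representation.ofMulAction ℂ G G x) = _
  rw [LinearMap.trace_eq_matrix_trace ℂ (MonoidAlgebra.basis G ℂ)]
  rw [Matrix.trace]
  have hdiag : ∀ g : G, (LinearMap.toMatrix (MonoidAlgebra.basis G ℂ) (MonoidAlgebra.basis G ℂ)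
      (Representation.ofMulAction ℂ G G x)) g g = if x = 1 then 1 else 0 := by
    intro g
    rw [LinearMap.toMatrix_apply]
    have h1 : (MonoidAlgebra.basis G ℂ) g = MonoidAlgebra.single g 1 := rfl
    rw [h1]
    have h2 : (Representation.ofMulAction ℂ G G x) (MonoidAlgebra.single g 1)
        = MonoidAlgebra.single (x * g) 1 := by
      have := Representation.ofMulAction_single (k := ℂ) (G := G) (H := G) x g 1
      simpa [smul_eq_mul] using this
    rw [h2]
    have h3 : ((MonoidAlgebra.basis G ℂ).repr (MonoidAlgebra.single (x*g) 1)) g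
        = (Finsupp.single (x*g) (1:ℂ)) g := rfl
    rw [h3, Finsupp.single_apply]
    by_cases hx : x = 1
    · simp [hx]
    · have hne : ¬ (x * g = g) := fun h => hx (mul_right_cancel (by rw [one_mul]; exact h))
      simp [hne, hx]
  have : ∀ g ∈ Finset.univ, (LinearMap.toMatrix (MonoidAlgebra.basis G ℂ) (MonoidAlgebra.basis G ℂ)
      ((Representation.ofMulAction ℂ G G) x)).diag g = if x = 1 then 1 else 0 :=
    fun g _ => hdiag g
  rw [Finset.sum_congr rfl this]
  by_cases hx : x = 1 <;> simp [hx, Finset.card_univ]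

lemma orth {ι : Type} [Fintype ι] (ρ : ι → FDRep ℂ G) (hirr : ∀ i, Simple (ρ i))
    (hdisj : ∀ i j : ι, Nonempty (ρ i ≅ ρ j) → i = j) (i j : ι) :
    (Fintype.card G : ℂ)⁻¹ * ∑ g : G, (ρ i).character g * (ρ j).character g⁻¹
      = if i = j then 1 else 0 := by
  letI : Invertible (Fintype.card G : ℂ) := invertibleOfNonzero (FDRepAux.card_ne_zero' G)
  letI : Invertible (Nat.card G : ℂ) := invertibleOfNonzero
    (by rw [Nat.card_eq_fintype_card]; exact FDRepAux.card_ne_zero' G)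
  haveI := hirr i
  haveI := hirr j
  have h1 := FDRep.char_orthonormal (ρ i) (ρ j)
  have h2 : (Fintype.card G : ℂ)⁻¹ * ∑ g : G, (ρ i).character g * (ρ j).character g⁻¹
      = if Nonempty (ρ i ≅ ρ j) then 1 else 0 := by
    rw [← Nat.card_eq_fintype_card]
    exact h1
  rw [h2]
  by_cases h : i = j
  · subst h
    simp
  · have : ¬ Nonempty (ρ i ≅ ρ j) := fun hne => h (hdisj i j hne)
    simp [h, this]

lemma sum_dim_char {ι : Type} [Fintype ι] (ρ : ι → FDRep ℂ G) (hirr : ∀ i, Simple (ρ i))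
    (hdisj : ∀ i j : ι, Nonempty (ρ i ≅ ρ j) → i = j)
    (hcomplete : ∀ V : FDRep ℂ G, Simple V → ∃ i, Nonempty (V ≅ ρ i)) (x : G) :
    ∑ i, (finrank ℂ (ρ i) : ℂ) * (ρ i).character x
      = if x = 1 then (Fintype.card G : ℂ) else 0 := by
  obtain ⟨m, hm⟩ := char_decomp ρ hcomplete (regRep G)
  have hmj : ∀ j, (m j : ℂ) = (finrank ℂ (ρ j) : ℂ) := by
    intro j
    have e1 : (Fintype.card G : ℂ)⁻¹ * ∑ y : G, (regRep G).character y * (ρ j).character y⁻¹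
        = (finrank ℂ (ρ j) : ℂ) := by
      have : ∀ y ∈ Finset.univ, (regRep G).character y * (ρ j).character y⁻¹
          = if y = 1 then (Fintype.card G : ℂ) * (ρ j).character y⁻¹ else 0 := by
        intro y _
        rw [regRep_char]
        by_cases h : y = 1 <;> simp [h]
      rw [Finset.sum_congr rfl this, Finset.sum_ite_eq' Finset.univ (1 : G)
        (fun y => (Fintype.card G : ℂ) * (ρ j).character y⁻¹)]
      simp [inv_one, FDRep.char_one, ← mul_assoc, inv_mul_cancel₀ (FDRepAux.card_ne_zero' G)]
    have e2 : (Fintype.card G : ℂ)⁻¹ * ∑ y : G, (regRep G).character y * (ρ j).character y⁻¹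
        = (m j : ℂ) := by
      have h1 : ∀ y ∈ Finset.univ, (regRep G).character y * (ρ j).character y⁻¹
          = ∑ i, (m i : ℂ) * ((ρ i).character y * (ρ j).character y⁻¹) := by
        intro y _
        rw [hm y, Finset.sum_mul]
        exact Finset.sum_congr rfl fun i _ => by ring
      rw [Finset.sum_congr rfl h1, Finset.sum_comm, Finset.mul_sum]
      have h2 : ∀ i ∈ Finset.univ, (Fintype.card G : ℂ)⁻¹
            * ∑ y : G, (m i : ℂ) * ((ρ i).character y * (ρ j).character y⁻¹)
          = (m i : ℂ) * (if i = j then 1 else 0) := by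
        intro i _
        rw [← Finset.mul_sum, ← orth ρ hirr hdisj i j]
        ring
      rw [Finset.sum_congr rfl h2]
      simp
    rw [← e1, e2]
  have : ∀ i ∈ Finset.univ, (finrank ℂ (ρ i) : ℂ) * (ρ i).character x
      = (m i : ℂ) * (ρ i).character x := fun i _ => by rw [hmj i]
  rw [Finset.sum_congr rfl this, ← hm x, regRep_char]

lemma schur_avg (V : FDRep ℂ G) (hs : Simple V) (a b : G) :
    (finrank ℂ V : ℂ) * ∑ g : G, V.character (g * a * g⁻¹ * b)
      = (Fintype.card G : ℂ) * (V.character a * V.character b) := by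
  haveI := hs
  set T : V →ₗ[ℂ] V := ∑ g : G, V.ρ (g * a * g⁻¹) with hT
  have hcomm : ∀ h : G, T ∘ₗ V.ρ h = V.ρ h ∘ₗ T := by
    intro h
    rw [hT]
    ext x
    simp only [LinearMap.comp_apply, LinearMap.sum_apply, map_sum]
    have key : ∀ (u w : G) (y : V), V.ρ u ((V.ρ w) y) = V.ρ (u * w) y := by
      intro u w y
      rw [map_mul, Module.End.mul_apply]
    refine Fintype.sum_bijective (h⁻¹ * ·) (Group.mulLeft_bijective h⁻¹) _ _ fun g => ?_
    rw [key, key]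
    congr 1
    group
  let f : V ⟶ V := ⟨FGModuleCat.ofHom T, fun g => by
    ext v
    exact congrArg (fun p => p v) (hcomm g)⟩
  obtain ⟨c, hc⟩ := CategoryTheory.endomorphism_simple_eq_smul_id (𝕜 := ℂ) f
  have hchom : c • LinearMap.id (R := ℂ) (M := V) = T := by
    have := congrArg (fun p => ConcreteCategory.hom p.hom) hc
    simp [f] at this
    rw [← this]
    rfl
  -- trace of T
  have htrT : LinearMap.trace ℂ V T = (Fintype.card G : ℂ) * V.character a := by
    rw [hT, map_sum]
    have : ∀ g ∈ Finset.univ, LinearMap.trace ℂ V (V.ρ (g * a * g⁻¹)) = V.character a :=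
      fun g _ => FDRep.char_conj V a g
    rw [Finset.sum_congr rfl this, Finset.sum_const, Finset.card_univ, nsmul_eq_mul]
  have hcd : c * (finrank ℂ V : ℂ) = (Fintype.card G : ℂ) * V.character a := by
    have h6 := congrArg (LinearMap.trace ℂ V) hchom
    rw [map_smul, LinearMap.trace_id, smul_eq_mul, htrT] at h6
    exact h6
  -- trace of T ∘ ρ b
  have htrTb : LinearMap.trace ℂ V (T ∘ₗ V.ρ b) = ∑ g : G, V.character (g * a * g⁻¹ * b) := by
    rw [hT]
    have : (∑ g : G, V.ρ (g * a * g⁻¹)) ∘ₗ V.ρ b = ∑ g : G, V.ρ (g * a * g⁻¹ * b) := by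
      ext x
      simp only [LinearMap.comp_apply, LinearMap.sum_apply]
      refine Finset.sum_congr rfl fun g _ => ?_
      have key : ∀ (u w : G) (y : V), V.ρ u ((V.ρ w) y) = V.ρ (u * w) y := by
        intro u w y
        rw [map_mul, Module.End.mul_apply]
      rw [key]
    rw [this, map_sum]
    rfl
  have htrTb2 : LinearMap.trace ℂ V (T ∘ₗ V.ρ b) = c * V.character b := by
    rw [← hchom]
    have : (c • LinearMap.id (R := ℂ) (M := V)) ∘ₗ V.ρ b = c • V.ρ b := by
      ext x; simp
    rw [this, map_smul, smul_eq_mul]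
    rfl
  calc (finrank ℂ V : ℂ) * ∑ g : G, V.character (g * a * g⁻¹ * b)
      = (finrank ℂ V : ℂ) * (c * V.character b) := by rw [← htrTb, htrTb2]
    _ = (c * (finrank ℂ V : ℂ)) * V.character b := by ring
    _ = (Fintype.card G : ℂ) * (V.character a * V.character b) := by rw [hcd]; ring

lemma key_count {ι : Type} [Fintype ι] (ρ : ι → FDRep ℂ G) (hirr : ∀ i, Simple (ρ i))
    (hdisj : ∀ i j : ι, Nonempty (ρ i ≅ ρ j) → i = j)
    (hcomplete : ∀ V : FDRep ℂ G, Simple V → ∃ i, Nonempty (V ≅ ρ i)) (a b : G) :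
    ∑ i, (ρ i).character a * (ρ i).character b
      = (Fintype.card {g : G // g * a * g⁻¹ * b = 1} : ℂ) := by
  have h1 : (Fintype.card G : ℂ) * ∑ i, (ρ i).character a * (ρ i).character b
      = ∑ i, (finrank ℂ (ρ i) : ℂ) * ∑ g : G, (ρ i).character (g * a * g⁻¹ * b) := by
    rw [Finset.mul_sum]
    exact Finset.sum_congr rfl fun i _ => (schur_avg (ρ i) (hirr i) a b).symm
  have h2 : ∑ i, (finrank ℂ (ρ i) : ℂ) * ∑ g : G, (ρ i).character (g * a * g⁻¹ * b)
      = ∑ g : G, ∑ i, (finrank ℂ (ρ i) : ℂ) * (ρ i).character (g * a * g⁻¹ * b) := by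
    rw [Finset.sum_comm]
    exact Finset.sum_congr rfl fun i _ => Finset.mul_sum _ _ _
  have h3 : ∑ g : G, ∑ i, (finrank ℂ (ρ i) : ℂ) * (ρ i).character (g * a * g⁻¹ * b)
      = ∑ g : G, (if g * a * g⁻¹ * b = 1 then (Fintype.card G : ℂ) else 0) :=
    Finset.sum_congr rfl fun g _ => sum_dim_char ρ hirr hdisj hcomplete _
  have h4 : ∑ g : G, (if g * a * g⁻¹ * b = 1 then (Fintype.card G : ℂ) else 0)
      = (Fintype.card {g : G // g * a * g⁻¹ * b = 1} : ℂ) * (Fintype.card G : ℂ) := by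
    rw [Finset.sum_ite, Finset.sum_const, Finset.sum_const_zero, add_zero, nsmul_eq_mul,
      Fintype.card_subtype]
  have h5 := h1.trans (h2.trans (h3.trans h4))
  have := mul_left_cancel₀ (FDRepAux.card_ne_zero' G)
    (h5.trans (by ring))
  exact this

lemma simple_nontrivial {G : Type} [Group G] [Fintype G] (V : FDRep ℂ G) (hs : Simple V) :
    Nontrivial V := by
  haveI := hs
  by_contra h
  have hss : Subsingleton V := not_nontrivial_iff_subsingleton.mp h
  have h0 : (𝟙 V : V ⟶ V) = 0 := by
    apply Action.hom_ext
    apply ConcreteCategory.hom_ext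
    intro v
    exact @Subsingleton.elim _ hss _ _
  exact CategoryTheory.id_nonzero V h0

end

end PlancherelAux

/-- For a finite group `G`, a complete family of pairwise non-isomorphic
irreducible complex representations, a subgroup `H ≤ G`, and
`X_H = ⟨Res_H χ_ρ, 1⟩_H / d_ρ`, the second moment over the Plancherel measure satisfies
`E_ρ[X_H²] = (1/(|G|·|H|²)) · Σ_{h₁,h₂ ∈ H} |{g ∈ G : h₁⁻¹ g h₂ = g}|`. -/
theorem plancherel_second_moment_of_trivial_multiplicity_fraction
    {G : Type} [Group G] [Fintype G]
    (ι : Type) [Fintype ι] (ρ : ι → FDRep ℂ G)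
    (hirr : ∀ i, Simple (ρ i))
    (hdisj : ∀ i j : ι, Nonempty (ρ i ≅ ρ j) → i = j)
    (hcomplete : ∀ V : FDRep ℂ G, Simple V → ∃ i, Nonempty (V ≅ ρ i))
    (H : Subgroup G) :
    ∑ i : ι, ((Module.finrank ℂ (ρ i) : ℂ) ^ 2 / (Fintype.card G : ℂ)) *
        ((((Fintype.card H : ℂ)⁻¹ * ∑ h : H, (ρ i).character (h : G)) /
          (Module.finrank ℂ (ρ i) : ℂ)) ^ 2)
      = (1 / ((Fintype.card G : ℂ) * (Fintype.card H : ℂ) ^ 2)) *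
          ∑ h₁ : H, ∑ h₂ : H,
            (Fintype.card {g : G // (h₁ : G)⁻¹ * g * (h₂ : G) = g} : ℂ) := by
  have hcG : (Fintype.card G : ℂ) ≠ 0 := Nat.cast_ne_zero.2 Fintype.card_ne_zero
  have hcH : (Fintype.card H : ℂ) ≠ 0 := Nat.cast_ne_zero.2 Fintype.card_ne_zero
  have hd : ∀ i, (Module.finrank ℂ (ρ i) : ℂ) ≠ 0 := by
    intro i
    have := simple_nontrivial (ρ i) (hirr i)
    have hpos : 0 < Module.finrank ℂ (ρ i) := Module.finrank_pos_iff.mpr this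
    exact Nat.cast_ne_zero.2 (by omega)
  -- master identity
  have master : ∑ i : ι, (∑ h : H, (ρ i).character (h : G)) ^ 2
      = ∑ h₁ : H, ∑ h₂ : H,
          (Fintype.card {g : G // (h₁ : G)⁻¹ * g * (h₂ : G) = g} : ℂ) := by
    have step1 : ∀ i : ι, (∑ h : H, (ρ i).character (h : G)) ^ 2
        = ∑ h₁ : H, ∑ h₂ : H, (ρ i).character ((h₁ : G)⁻¹) * (ρ i).character (h₂ : G) := by
      intro i
      rw [sq, Finset.sum_mul_sum]
      refine Fintype.sum_equiv (Equiv.inv H) _ _ fun h₁ => ?_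
      refine Finset.sum_congr rfl fun h₂ _ => ?_
      congr 1
      simp
    rw [Finset.sum_congr rfl fun i _ => step1 i, Finset.sum_comm]
    refine Finset.sum_congr rfl fun h₁ _ => ?_
    rw [Finset.sum_comm]
    refine Finset.sum_congr rfl fun h₂ _ => ?_
    have hk := key_count ρ hirr hdisj hcomplete (h₂ : G) ((h₁ : G)⁻¹)
    have hcomm : ∑ i : ι, (ρ i).character ((h₁ : G)⁻¹) * (ρ i).character (h₂ : G)
        = ∑ i : ι, (ρ i).character (h₂ : G) * (ρ i).character ((h₁ : G)⁻¹) :=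
      Finset.sum_congr rfl fun i _ => mul_comm _ _
    rw [hcomm, hk]
    congr 1
    apply Fintype.card_congr
    apply Equiv.subtypeEquivRight
    intro g
    constructor
    · intro h
      have h5 : g * (h₂ : G) * g⁻¹ = (h₁ : G) := mul_inv_eq_one.mp h
      have h7 : (g * (h₂ : G) : G) = (h₁ : G) * g := mul_inv_eq_iff_eq_mul.mp h5
      rw [mul_assoc]
      exact inv_mul_eq_iff_eq_mul.mpr h7
    · intro h
      have h7 : (g * (h₂ : G) : G) = (h₁ : G) * g := by
        rw [← inv_mul_eq_iff_eq_mul, ← mul_assoc]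
        exact h
      exact mul_inv_eq_one.mpr (mul_inv_eq_iff_eq_mul.mpr h7)
  have perterm : ∀ i : ι, ((Module.finrank ℂ (ρ i) : ℂ) ^ 2 / (Fintype.card G : ℂ)) *
        ((((Fintype.card H : ℂ)⁻¹ * ∑ h : H, (ρ i).character (h : G)) /
          (Module.finrank ℂ (ρ i) : ℂ)) ^ 2)
      = (1 / ((Fintype.card G : ℂ) * (Fintype.card H : ℂ) ^ 2))
          * (∑ h : H, (ρ i).character (h : G)) ^ 2 := by
    intro i
    field_simp [hd i, hcG, hcH]
  rw [Finset.sum_congr rfl fun i _ => perterm i, ← Finset.mul_sum, master]
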